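/- Let r, r_1, …, r_n be positive integers and c_1, …, c_n integers satisfying the terminal-chain relations c_i r_i = r_{i-1} + r_{i+1} for i = 1, …, n with r_0 := r and r_{n+1} := 0, and define b_0 := 0, b_1 := 1, b_{j+1} := c_j b_j − b_{j-1} for 1 ≤ j ≤ n−1. Then in ℚ one has the identity 1/(r·r_1) + 1/(r_1·r_2) + … + 1/(r_{n-1}·r_n) = b_n/(r·r_n). -/

import Mathlib

/-- **Lemma 2.8 of the paper.**  For a terminal chain (`ρ 0 = r`, `ρ i = r_i`,
`ρ (n+1) = 0`) with attached sequence `b 0 = 0`, `b 1 = 1`,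
`b (j+1) = c j * b j - b (j-1)` (for `1 ≤ j ≤ n-1`), one has in `ℚ`:
`1/(r r₁) + 1/(r₁ r₂) + … + 1/(r_{n-1} r_n) = b_n / (r r_n)`. -/
theorem chain_sum_of_inverses (n : ℕ) (hn : 1 ≤ n) (ρ : ℕ → ℤ) (c : ℕ → ℤ) (b : ℕ → ℤ)
    (hpos : ∀ i ≤ n, 0 < ρ i) (hterm : ρ (n + 1) = 0)
    (hrel : ∀ i, 1 ≤ i → i ≤ n → c i * ρ i = ρ (i - 1) + ρ (i + 1))
    (hb0 : b 0 = 0) (hb1 : b 1 = 1)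
    (hbrec : ∀ j, 1 ≤ j → j ≤ n - 1 → b (j + 1) = c j * b j - b (j - 1)) :
    ∑ i ∈ Finset.Icc 1 n, (1 : ℚ) / ((ρ (i - 1) : ℚ) * (ρ i : ℚ))
      = (b n : ℚ) / ((ρ 0 : ℚ) * (ρ n : ℚ)) := by
  -- key invariant: b_{k+1} ρ_k - b_k ρ_{k+1} = ρ_0 for k ≤ n-1
  have key : ∀ k, k ≤ n - 1 → b (k + 1) * ρ k - b k * ρ (k + 1) = ρ 0 := by
    intro k
    induction k with
    | zero => intro _; simp [hb0, hb1]
    | succ k ih =>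
      intro hk
      have hk' : k ≤ n - 1 := Nat.le_of_succ_le hk
      have hb := hbrec (k + 1) (Nat.le_add_left 1 k) hk
      have hr := hrel (k + 1) (Nat.le_add_left 1 k)
        (by omega)
      simp only [Nat.add_sub_cancel] at hb hr
      have h := ih hk'
      linear_combination ρ (k + 1) * hb + b (k + 1) * hr + h
  have main : ∀ k, 1 ≤ k → k ≤ n →
      ∑ i ∈ Finset.Icc 1 k, (1 : ℚ) / ((ρ (i - 1) : ℚ) * (ρ i : ℚ))
        = (b k : ℚ) / ((ρ 0 : ℚ) * (ρ k : ℚ)) := by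
    intro k
    induction k with
    | zero => omega
    | succ k ih =>
      intro _ hkn
      rcases Nat.eq_or_lt_of_le (Nat.one_le_iff_ne_zero.mpr (Nat.succ_ne_zero k)) with h1 | h1
      · -- k + 1 = 1
        have hk0 : k = 0 := by omega
        subst hk0
        simp [hb1]
      · -- k ≥ 1
        have hk1 : 1 ≤ k := by omega
        have hkn' : k ≤ n := by omega
        rw [Finset.sum_Icc_succ_top (by omega), ih hk1 hkn']
        have h0 : (ρ 0 : ℚ) ≠ 0 := by
          exact_mod_cast (hpos 0 (by omega)).ne'
        have hk : (ρ k : ℚ) ≠ 0 := by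
          exact_mod_cast (hpos k hkn').ne'
        have hk1' : (ρ (k + 1) : ℚ) ≠ 0 := by
          exact_mod_cast (hpos (k + 1) hkn).ne'
        have hkey := key k (by omega)
        have hkeyQ : (b (k + 1) : ℚ) * ρ k - b k * ρ (k + 1) = ρ 0 := by
          exact_mod_cast congrArg (Int.cast : ℤ → ℚ) hkey
        simp only [Nat.add_sub_cancel]
        field_simp
        linear_combination (-1 : ℚ) * hkeyQ
  exact main n hn le_rfl
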